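/- Any function f that dominates every computable function can compute a list of the computable functions: there is an f-computable sequence ⟨x_n⟩_{n∈ω} of elements of ω^ω such that {x_n : n ∈ ω} is exactly the set of total computable functions. -/

import Mathlib

open Filter

namespace Paper

/-- Codes for oracle Turing machines (relativized partial recursive functions). -/
inductive OCode : Type
  | oracle : OCode
  | zero : OCode
  | succ : OCode
  | left : OCode
  | right : OCode
  | pair : OCode → OCode → OCode
  | comp : OCode → OCode → OCode
  | prec : OCode → OCode → OCode
  | rfind' : OCode → OCode

/-- Evaluation of an oracle code relative to an oracle `O`. -/
def evalo (O : ℕ →. ℕ) : OCode → ℕ →. ℕ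
  | .oracle => O
  | .zero => fun _ => Part.some 0
  | .succ => fun n => Part.some (n + 1)
  | .left => fun n => Part.some n.unpair.1
  | .right => fun n => Part.some n.unpair.2
  | .pair cf cg => fun n => Nat.pair <$> evalo O cf n <*> evalo O cg n
  | .comp cf cg => fun n => evalo O cg n >>= evalo O cf
  | .prec cf cg => Nat.unpaired fun a n =>
      n.rec (evalo O cf a) fun y IH => do
        let i ← IH
        evalo O cg (Nat.pair a (Nat.pair y i))
  | .rfind' cf => Nat.unpaired fun a m =>
      (Nat.rfind fun n => (fun x => x = 0) <$> evalo O cf (Nat.pair a (n + m))).map (· + m)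

/-- Turing reducibility for total functions. -/
def TRed (f g : ℕ → ℕ) : Prop := ∃ c : OCode, evalo (g : ℕ →. ℕ) c = (f : ℕ →. ℕ)

/-- `g` is a uniform modulus of computation for `f`. -/
def UniformModulus (g f : ℕ → ℕ) : Prop :=
  ∃ c : OCode, ∀ h : ℕ → ℕ, (∀ i, g i ≤ h i) → evalo (h : ℕ →. ℕ) c = (f : ℕ →. ℕ)

end Paper

namespace JockuschProof

open Nat.Partrec (Code)
open Nat.Partrec.Code

/-! ### Embedding plain codes into oracle codes -/

def embed : Code → Paper.OCode
  | Code.zero => .zero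
  | Code.succ => .succ
  | Code.left => .left
  | Code.right => .right
  | Code.pair cf cg => .pair (embed cf) (embed cg)
  | Code.comp cf cg => .comp (embed cf) (embed cg)
  | Code.prec cf cg => .prec (embed cf) (embed cg)
  | Code.rfind' cf => .rfind' (embed cf)

theorem evalo_embed (O : ℕ →. ℕ) : ∀ c : Code, Paper.evalo O (embed c) = eval c := by
  intro c
  induction c with
  | zero => rfl
  | succ => rfl
  | left => rfl
  | right => rfl
  | pair cf cg ihf ihg => simp [embed, Paper.evalo, eval, ihf, ihg]; rfl
  | comp cf cg ihf ihg => simp [embed, Paper.evalo, eval, ihf, ihg]; rfl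
  | prec cf cg ihf ihg => simp [embed, Paper.evalo, eval, ihf, ihg]; rfl
  | rfind' cf ihf => simp [embed, Paper.evalo, eval, ihf]; rfl

/-! ### Oracle computability of total functions -/

def OComp (O : ℕ → ℕ) (h : ℕ → ℕ) : Prop :=
  ∃ c : Paper.OCode, Paper.evalo (O : ℕ →. ℕ) c = (h : ℕ →. ℕ)

theorem OComp.of_eq {O h h' : ℕ → ℕ} (H : OComp O h) (e : ∀ n, h n = h' n) : OComp O h' :=
  (funext e : h = h') ▸ H

theorem OComp.of_computable {O h : ℕ → ℕ} (hc : Computable h) : OComp O h := by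
  obtain ⟨c, hc⟩ := Nat.Partrec.Code.exists_code.mp (Partrec.nat_iff.mp hc)
  exact ⟨embed c, (evalo_embed _ c).trans hc⟩

theorem OComp.oracle (O : ℕ → ℕ) : OComp O O := ⟨.oracle, rfl⟩

theorem OComp.comp {O h g : ℕ → ℕ} (hh : OComp O h) (hg : OComp O g) :
    OComp O fun n => h (g n) := by
  obtain ⟨ch, eh⟩ := hh; obtain ⟨cg, eg⟩ := hg
  refine ⟨.comp ch cg, funext fun n => ?_⟩
  simp [Paper.evalo, eh, eg, PFun.coe_val]
  exact Part.bind_some (g n) _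

theorem OComp.pair {O h g : ℕ → ℕ} (hh : OComp O h) (hg : OComp O g) :
    OComp O fun n => Nat.pair (h n) (g n) := by
  obtain ⟨ch, eh⟩ := hh; obtain ⟨cg, eg⟩ := hg
  refine ⟨.pair ch cg, funext fun n => ?_⟩
  simp [Paper.evalo, eh, eg, PFun.coe_val, Seq.seq]

theorem OComp.prec {O base step : ℕ → ℕ} (hb : OComp O base) (hs : OComp O step) :
    OComp O fun n => Nat.rec (motive := fun _ => ℕ) (base n.unpair.1)
      (fun y ih => step (Nat.pair n.unpair.1 (Nat.pair y ih))) n.unpair.2 := by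
  obtain ⟨cb, eb⟩ := hb; obtain ⟨cs, es⟩ := hs
  refine ⟨.prec cb cs, funext fun n => ?_⟩
  have key : ∀ a k : ℕ,
      (Nat.rec (motive := fun _ => Part ℕ) (Paper.evalo (O : ℕ →. ℕ) cb a)
        (fun y IH => IH >>= fun i => Paper.evalo (O : ℕ →. ℕ) cs (Nat.pair a (Nat.pair y i))) k)
      = Part.some (Nat.rec (motive := fun _ => ℕ) (base a)
          (fun y ih => step (Nat.pair a (Nat.pair y ih))) k) := by
    intro a k
    induction k with
    | zero => simp [eb, PFun.coe_val]
    | succ k ih =>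
        simp only [es, PFun.coe_val] at ih ⊢
        rw [ih]
        simp
  simp only [Paper.evalo, Nat.unpaired, PFun.coe_val]
  rw [key n.unpair.1 n.unpair.2]

/-- The oracle can compute the code of its own initial segments. -/
theorem OComp.seg (O : ℕ → ℕ) :
    OComp O fun n => Encodable.encode ((List.range n.unpair.2).map O) := by
  have hbase : OComp O fun _ : ℕ => Encodable.encode ([] : List ℕ) :=
    .of_computable (Computable.const _)
  have hy : Computable fun q : ℕ => q.unpair.2.unpair.1 :=
    (Primrec.fst.comp (Primrec.unpair.comp (Primrec.snd.comp Primrec.unpair))).to_comp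
  have hi : Computable fun q : ℕ => q.unpair.2.unpair.2 :=
    (Primrec.snd.comp (Primrec.unpair.comp (Primrec.snd.comp Primrec.unpair))).to_comp
  have comb : Computable fun p : ℕ =>
      Encodable.encode ((Denumerable.ofNat (List ℕ) p.unpair.2) ++ [p.unpair.1]) := by
    have h1 : Computable fun p : ℕ => Denumerable.ofNat (List ℕ) p.unpair.2 :=
      ((Primrec.ofNat (List ℕ)).comp (Primrec.snd.comp Primrec.unpair)).to_comp
    have h2 : Computable fun p : ℕ => p.unpair.1 :=
      (Primrec.fst.comp Primrec.unpair).to_comp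
    exact Computable.encode.comp (Computable.list_concat.comp h1 h2)
  have hstep : OComp O fun q => Encodable.encode
      ((Denumerable.ofNat (List ℕ) q.unpair.2.unpair.2) ++ [O q.unpair.2.unpair.1]) := by
    have inner : OComp O fun q => Nat.pair (O q.unpair.2.unpair.1) q.unpair.2.unpair.2 :=
      .pair (.comp (.oracle O) (.of_computable hy)) (.of_computable hi)
    exact ((OComp.of_computable comb).comp inner).of_eq (fun q => by
      simp [Nat.unpair_pair])
  refine (OComp.prec hbase hstep).of_eq (fun n => ?_)
  have key : ∀ k : ℕ, (Nat.rec (motive := fun _ => ℕ)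
      (Encodable.encode ([] : List ℕ))
      (fun y ih => Encodable.encode ((Denumerable.ofNat (List ℕ) ih) ++ [O y])) k)
      = Encodable.encode ((List.range k).map O) := by
    intro k
    induction k with
    | zero => simp
    | succ k ih =>
        show Encodable.encode ((Denumerable.ofNat (List ℕ) (Nat.rec _ _ k)) ++ [O k]) = _
        rw [ih]
        simp [Denumerable.ofNat_encode, List.range_succ]
  simp only [Nat.unpair_pair]
  exact key n.unpair.2

end JockuschProof

namespace JockuschProof

open Nat.Partrec (Code)
open Nat.Partrec.Code

/-! ### The listing construction -/

/-- Does code `e` halt on `j` within fuel `max (F j) s + j + 1`? -/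
def chk (F : ℕ → ℕ) (e s j : ℕ) : Bool :=
  (evaln (max (F j) s + j + 1) (Denumerable.ofNat Code e) j).isSome

/-- `chk` holds at every `j ≤ k`. -/
def goodB (F : ℕ → ℕ) (e s : ℕ) : ℕ → Bool :=
  fun k => Nat.rec (motive := fun _ => Bool) (chk F e s 0)
    (fun j acc => acc && chk F e s (j + 1)) k

theorem goodB_zero {F : ℕ → ℕ} {e s : ℕ} : goodB F e s 0 = chk F e s 0 := rfl

theorem goodB_succ {F : ℕ → ℕ} {e s k : ℕ} :
    goodB F e s (k + 1) = (goodB F e s k && chk F e s (k + 1)) := rfl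

theorem goodB_iff {F : ℕ → ℕ} {e s k : ℕ} :
    goodB F e s k = true ↔ ∀ j ≤ k, chk F e s j = true := by
  induction k with
  | zero =>
    rw [goodB_zero]
    constructor
    · intro h j hj; rw [Nat.le_zero.mp hj]; exact h
    · exact fun h => h 0 le_rfl
  | succ k ih =>
    rw [goodB_succ, Bool.and_eq_true, ih]
    constructor
    · rintro ⟨h1, h2⟩ j hj
      rcases (by omega : j ≤ k ∨ j = k + 1) with h | h
      · exact h1 j h
      · rw [h]; exact h2
    · intro h
      exact ⟨fun j hj => h j (hj.trans (Nat.le_succ k)), h _ le_rfl⟩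

/-- The listing function (relative to `F`). -/
def core (F : ℕ → ℕ) (m : ℕ) : ℕ :=
  bif goodB F m.unpair.1.unpair.1 m.unpair.1.unpair.2 m.unpair.2 then
    (evaln (max (F m.unpair.2) m.unpair.1.unpair.2 + m.unpair.2 + 1)
      (Denumerable.ofNat Code m.unpair.1.unpair.1) m.unpair.2).getD 0
  else 0

theorem chk_congr {F G : ℕ → ℕ} {e s j : ℕ} (h : F j = G j) :
    chk F e s j = chk G e s j := by unfold chk; rw [h]

theorem goodB_congr {F G : ℕ → ℕ} {e s k : ℕ} (h : ∀ j ≤ k, F j = G j) :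
    goodB F e s k = goodB G e s k := by
  induction k with
  | zero => exact chk_congr (h 0 le_rfl)
  | succ k ih =>
    rw [goodB_succ, goodB_succ, ih fun j hj => h j (hj.trans (Nat.le_succ k)),
      chk_congr (h _ le_rfl)]

theorem core_congr {F G : ℕ → ℕ} {m : ℕ} (h : ∀ j ≤ m.unpair.2, F j = G j) :
    core F m = core G m := by
  unfold core
  rw [goodB_congr h, h _ le_rfl]

/-- Turn an (encoded) list into a function. -/
def FL (ℓ : ℕ) : ℕ → ℕ := fun j => (Denumerable.ofNat (List ℕ) ℓ).getD j 0

/-- The plain (non-oracle) part of the computation of `core`. -/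
def ufun (m' : ℕ) : ℕ := core (FL m'.unpair.2) m'.unpair.1

theorem primrec_chkP : Primrec fun q : (ℕ × ℕ) × ℕ × ℕ =>
    chk (FL q.1.1) q.2.1 q.1.2 q.2.2 := by
  have hfuel : Primrec fun q : (ℕ × ℕ) × ℕ × ℕ =>
      max (FL q.1.1 q.2.2) q.1.2 + q.2.2 + 1 := by
    unfold FL
    have hget : Primrec fun q : (ℕ × ℕ) × ℕ × ℕ =>
        (Denumerable.ofNat (List ℕ) q.1.1).getD q.2.2 0 :=
      Primrec₂.comp (f := fun (l : List ℕ) (n : ℕ) => l.getD n 0) (Primrec.list_getD 0)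
        ((Primrec.ofNat (List ℕ)).comp (Primrec.fst.comp Primrec.fst))
        (Primrec.snd.comp Primrec.snd)
    have hmax : Primrec fun q : (ℕ × ℕ) × ℕ × ℕ =>
        max ((Denumerable.ofNat (List ℕ) q.1.1).getD q.2.2 0) q.1.2 :=
      Primrec₂.comp Primrec.nat_max hget (Primrec.snd.comp Primrec.fst)
    exact Primrec.succ.comp
      (Primrec₂.comp Primrec.nat_add hmax (Primrec.snd.comp Primrec.snd))
  have harg : Primrec fun q : (ℕ × ℕ) × ℕ × ℕ =>
      ((max (FL q.1.1 q.2.2) q.1.2 + q.2.2 + 1, Denumerable.ofNat Code q.2.1), q.2.2) :=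
    (hfuel.pair ((Primrec.ofNat Code).comp (Primrec.fst.comp Primrec.snd))).pair
      (Primrec.snd.comp Primrec.snd)
  exact ((Primrec.option_isSome.comp (primrec_evaln.comp harg)).of_eq fun q => rfl)

theorem primrec_goodP : Primrec₂ fun (a : (ℕ × ℕ) × ℕ) (k : ℕ) =>
    goodB (FL a.1.1) a.2 a.1.2 k := by
  have hf : Primrec fun a : (ℕ × ℕ) × ℕ => chk (FL a.1.1) a.2 a.1.2 0 :=
    primrec_chkP.comp (Primrec.fst.pair (Primrec.snd.pair (Primrec.const 0)))
  have hg : Primrec₂ fun (a : (ℕ × ℕ) × ℕ) (p : ℕ × Bool) =>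
      (p.2 && chk (FL a.1.1) a.2 a.1.2 (p.1 + 1)) :=
    Primrec₂.comp Primrec.and (Primrec.snd.comp Primrec.snd)
      (primrec_chkP.comp (Primrec.pair (Primrec.fst.comp Primrec.fst)
        (Primrec.pair (Primrec.snd.comp Primrec.fst)
          (Primrec.succ.comp (Primrec.fst.comp Primrec.snd)))))
  exact (Primrec.nat_rec hf hg).of_eq fun a k => rfl

set_option maxHeartbeats 1000000 in
theorem primrec_ufun : Primrec ufun := by
  have hm : Primrec fun m' : ℕ => m'.unpair.1 := Primrec.fst.comp Primrec.unpair
  have hl : Primrec fun m' : ℕ => m'.unpair.2 := Primrec.snd.comp Primrec.unpair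
  have hn : Primrec fun m' : ℕ => m'.unpair.1.unpair.1 :=
    Primrec.fst.comp (Primrec.unpair.comp hm)
  have hk : Primrec fun m' : ℕ => m'.unpair.1.unpair.2 :=
    Primrec.snd.comp (Primrec.unpair.comp hm)
  have he : Primrec fun m' : ℕ => m'.unpair.1.unpair.1.unpair.1 :=
    Primrec.fst.comp (Primrec.unpair.comp hn)
  have hs : Primrec fun m' : ℕ => m'.unpair.1.unpair.1.unpair.2 :=
    Primrec.snd.comp (Primrec.unpair.comp hn)
  have hcond : Primrec fun m' : ℕ =>
      goodB (FL m'.unpair.2) m'.unpair.1.unpair.1.unpair.1 m'.unpair.1.unpair.1.unpair.2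
        m'.unpair.1.unpair.2 := by
    have := Primrec₂.comp
      (f := fun (a : (ℕ × ℕ) × ℕ) (k : ℕ) => goodB (FL a.1.1) a.2 a.1.2 k)
      primrec_goodP ((hl.pair hs).pair he) hk
    exact this
  have hget : Primrec fun m' : ℕ => FL m'.unpair.2 m'.unpair.1.unpair.2 := by
    unfold FL
    exact Primrec₂.comp (f := fun (l : List ℕ) (n : ℕ) => l.getD n 0) (Primrec.list_getD 0)
      ((Primrec.ofNat (List ℕ)).comp hl) hk
  have hfuel : Primrec fun m' : ℕ =>
      max (FL m'.unpair.2 m'.unpair.1.unpair.2) m'.unpair.1.unpair.1.unpair.2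
        + m'.unpair.1.unpair.2 + 1 :=
    Primrec.succ.comp (Primrec₂.comp Primrec.nat_add
      (Primrec₂.comp Primrec.nat_max hget hs) hk)
  have hev : Primrec fun m' : ℕ =>
      evaln (max (FL m'.unpair.2 m'.unpair.1.unpair.2) m'.unpair.1.unpair.1.unpair.2
          + m'.unpair.1.unpair.2 + 1)
        (Denumerable.ofNat Code m'.unpair.1.unpair.1.unpair.1) m'.unpair.1.unpair.2 :=
    (primrec_evaln.comp ((hfuel.pair ((Primrec.ofNat Code).comp he)).pair hk)).of_eq fun q => rfl
  have hval : Primrec fun m' : ℕ =>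
      (evaln (max (FL m'.unpair.2 m'.unpair.1.unpair.2) m'.unpair.1.unpair.1.unpair.2
          + m'.unpair.1.unpair.2 + 1)
        (Denumerable.ofNat Code m'.unpair.1.unpair.1.unpair.1) m'.unpair.1.unpair.2).getD 0 :=
    Primrec₂.comp (f := fun (o : Option ℕ) (d : ℕ) => o.getD d) Primrec.option_getD hev
      (Primrec.const 0)
  exact (Primrec.cond hcond hval (Primrec.const 0)).of_eq fun m' => by
    unfold ufun core FL
    rfl

end JockuschProof

namespace JockuschProof

open Nat.Partrec (Code)
open Nat.Partrec.Code

theorem getD_map_range (f : ℕ → ℕ) {k j : ℕ} (h : j < k) :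
    ((List.range k).map f).getD j 0 = f j := by
  rw [List.getD_eq_getElem _ _ (by simpa using h)]
  simp

/-- `core f` is computable from oracle `f`. -/
theorem ocomp_core (f : ℕ → ℕ) : OComp f (core f) := by
  have hinner : Computable fun m : ℕ => Nat.pair 0 (m.unpair.2 + 1) :=
    (Primrec₂.natPair.comp (Primrec.const 0)
      (Primrec.succ.comp (Primrec.snd.comp Primrec.unpair))).to_comp
  have hS : OComp f fun m => Encodable.encode ((List.range (m.unpair.2 + 1)).map f) :=
    ((OComp.seg f).comp (.of_computable hinner)).of_eq fun m => by
      simp [Nat.unpair_pair]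
  have hxarg : OComp f fun m =>
      Nat.pair m (Encodable.encode ((List.range (m.unpair.2 + 1)).map f)) :=
    OComp.pair (.of_computable Computable.id) hS
  refine ((OComp.of_computable primrec_ufun.to_comp).comp hxarg).of_eq fun m => ?_
  show ufun (Nat.pair m (Encodable.encode ((List.range (m.unpair.2 + 1)).map f))) = core f m
  unfold ufun
  simp only [Nat.unpair_pair]
  refine core_congr fun j hj => ?_
  unfold FL
  rw [Denumerable.ofNat_encode]
  exact getD_map_range f (by omega)

/-- Each column of `core f` is a computable function. -/
theorem column_computable (f : ℕ → ℕ) (n : ℕ) (g : ℕ → ℕ)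
    (hg : ∀ k, core f (Nat.pair n k) = g k) : Computable g := by
  set e := n.unpair.1 with he
  set s := n.unpair.2 with hs
  set c := Denumerable.ofNat Code e with hc
  have hcol : ∀ k, g k = (bif goodB f e s k then
      (evaln (max (f k) s + k + 1) c k).getD 0 else 0) := by
    intro k
    rw [← hg k]
    unfold core
    rw [Nat.unpair_pair]
  by_cases hall : ∀ j, chk f e s j = true
  · -- the code is total (with the given fuel): the column is `eval c`
    have hmem : ∀ k, g k ∈ eval c k := by
      intro k
      have hgood : goodB f e s k = true := goodB_iff.mpr fun j _ => hall j
      obtain ⟨v, hv⟩ := Option.isSome_iff_exists.mp (hall k)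
      have hvk : g k = v := by rw [hcol k, hgood]; simp [chk, hv]; rw [hc, hv]; rfl
      rw [hvk]
      exact evaln_sound (by rw [hv]; rfl : v ∈ evaln (max (f k) s + k + 1) c k)
    exact Partrec.of_eq_tot (Partrec.nat_iff.mpr (exists_code.mpr ⟨c, rfl⟩)) hmem
  · -- the column is eventually zero, hence trivially computable
    have hex : ∃ j, ¬chk f e s j = true := by push_neg at hall; simpa using hall
    set j0 := Nat.find hex with hj0
    have hzero : ∀ k, j0 ≤ k → g k = 0 := by
      intro k hk
      rw [hcol k]
      have : goodB f e s k = false := by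
        rcases Bool.eq_false_or_eq_true (goodB f e s k) with h | h
        · exact absurd (goodB_iff.mp h j0 hk) (Nat.find_spec hex)
        · exact h
      rw [this]
      rfl
    set l : List ℕ := List.ofFn fun i : Fin j0 => g i with hl
    have hgl : ∀ k, l.getD k 0 = g k := by
      intro k
      by_cases h : k < j0
      · rw [List.getD_eq_getElem _ _ (by simpa [hl] using h)]
        simp [hl]
      · rw [List.getD_eq_default _ _ (by simpa [hl] using Nat.le_of_not_lt h),
          hzero k (Nat.le_of_not_lt h)]
    have : Computable fun k : ℕ => l.getD k 0 :=
      (Primrec₂.comp (f := fun (L : List ℕ) (n : ℕ) => L.getD n 0) (Primrec.list_getD 0)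
        (Primrec.const l) Primrec.id).to_comp
    exact this.of_eq hgl

/-- Every computable function appears as a column of `core f`, provided `f` dominates. -/
theorem column_exists (f : ℕ → ℕ)
    (hdom : ∀ g : ℕ → ℕ, Computable g → ∀ᶠ i in Filter.atTop, g i ≤ f i)
    (g : ℕ → ℕ) (hg : Computable g) : ∃ n, ∀ k, core f (Nat.pair n k) = g k := by
  obtain ⟨c, hc⟩ := exists_code.mp (Partrec.nat_iff.mp hg)
  have hex : ∀ j, ∃ fuel, (evaln fuel c j).isSome = true := by
    intro j
    have : g j ∈ eval c j := by rw [hc]; exact Part.mem_some _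
    obtain ⟨fuel, hfuel⟩ := evaln_complete.mp this
    exact ⟨fuel, by rw [Option.mem_def] at hfuel; rw [hfuel]; rfl⟩
  set t : ℕ → ℕ := fun j => Nat.find (hex j) with htdef
  have ht : Computable t := by
    have hp : Computable₂ fun (j fuel : ℕ) => (evaln fuel c j).isSome :=
      ((Primrec.option_isSome.comp (primrec_evaln.comp
        ((Primrec.snd.pair (Primrec.const c)).pair Primrec.fst))).of_eq
          fun q => rfl).to_comp
    have hrf : Partrec fun j => Nat.rfind fun fuel =>
        (Part.some ((evaln fuel c j).isSome) : Part Bool) :=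
      Partrec.rfind hp.partrec₂
    have heq : (fun j => Nat.rfind fun fuel =>
        (Part.some ((evaln fuel c j).isSome) : Part Bool)) = (t : ℕ →. ℕ) := by
      funext j
      refine Part.eq_some_iff.mpr (Nat.mem_rfind.mpr ⟨?_, ?_⟩)
      · simpa using Nat.find_spec (hex j)
      · intro m hm
        simpa using Nat.find_min (hex j) hm
    have : Partrec (t : ℕ →. ℕ) := heq ▸ hrf
    exact this
  obtain ⟨N, hN⟩ := Filter.eventually_atTop.mp (hdom t ht)
  set s : ℕ := (Finset.range N).sup t with hsdef
  set e : ℕ := Encodable.encode c with hedef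
  have hfuelge : ∀ j, t j ≤ max (f j) s + j + 1 := by
    intro j
    rcases le_or_gt N j with h | h
    · calc t j ≤ f j := hN j h
        _ ≤ max (f j) s + j + 1 := by omega
    · calc t j ≤ s := Finset.le_sup (Finset.mem_range.mpr h)
        _ ≤ max (f j) s + j + 1 := by omega
  have hsome : ∀ j, (evaln (max (f j) s + j + 1) c j).isSome = true := by
    intro j
    obtain ⟨v, hv⟩ := Option.isSome_iff_exists.mp (Nat.find_spec (hex j))
    have : v ∈ evaln (max (f j) s + j + 1) c j :=
      evaln_mono (hfuelge j) (by rw [Option.mem_def]; exact hv)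
    rw [Option.mem_def] at this
    rw [this]; rfl
  have hchk : ∀ j, chk f e s j = true := by
    intro j
    unfold chk
    rw [hedef, Denumerable.ofNat_encode]
    exact hsome j
  refine ⟨Nat.pair e s, fun k => ?_⟩
  unfold core
  rw [Nat.unpair_pair, Nat.unpair_pair]
  rw [goodB_iff.mpr fun j _ => hchk j]
  show (evaln (max (f k) s + k + 1) (Denumerable.ofNat Code e) k).getD 0 = g k
  rw [hedef, Denumerable.ofNat_encode]
  obtain ⟨v, hv⟩ := Option.isSome_iff_exists.mp (Nat.find_spec (hex k))
  have hvmem : v ∈ evaln (max (f k) s + k + 1) c k :=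
    evaln_mono (hfuelge k) (by rw [Option.mem_def]; exact hv)
  have hveval : v ∈ eval c k := evaln_sound hvmem
  rw [hc] at hveval
  have hvg : v = g k := Part.mem_some_iff.mp hveval
  rw [Option.mem_def] at hvmem
  rw [hvmem]
  exact hvg

end JockuschProof

/-- Jockusch: any `f` dominating every total computable function
computes a list of the computable functions: an `f`-computable `x` whose columns
`x^[n] = fun k => x (Nat.pair n k)` are exactly the total computable functions. -/
theorem dominating_computes_list_of_computable (f : ℕ → ℕ)
    (hdom : ∀ g : ℕ → ℕ, Computable g → ∀ᶠ i in Filter.atTop, g i ≤ f i) :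
    ∃ x : ℕ → ℕ, Paper.TRed x f ∧
      ∀ g : ℕ → ℕ, Computable g ↔ ∃ n, ∀ k, x (Nat.pair n k) = g k := by
  refine ⟨JockuschProof.core f, JockuschProof.ocomp_core f, fun g =>
    ⟨fun hg => JockuschProof.column_exists f hdom g hg,
     fun h => h.elim fun n hn => JockuschProof.column_computable f n g hn⟩⟩
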